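/- For a non-catastrophic convolutional code C, the free distance equals the limit (equivalently the supremum) of the column distances: d_free(C) = sup_j d_j^c(C), where the minimum in d_free is taken over codewords with nonzero constant coefficient. -/

import Mathlib

open Polynomial

-- Weight of the truncation (v_0, …, v_j) of a polynomial vector.
open scoped Classical in
noncomputable def wtTrunc {F : Type*} [Field F] {n : ℕ} (v : Fin n → F[X]) (j : ℕ) : ℕ :=
  ∑ t ∈ Finset.range (j + 1), ∑ i, if (v i).coeff t ≠ 0 then 1 else 0

/-- The j-th column distance of a convolutional code. -/
noncomputable def colDist {F : Type*} [Field F] {n : ℕ}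
    (C : Submodule F[X] (Fin n → F[X])) (j : ℕ) : ℕ :=
  sInf { w | ∃ v ∈ C, (∃ i, (v i).coeff 0 ≠ 0) ∧ wtTrunc v j = w }

/-- Hamming weight of a polynomial vector. -/
noncomputable def wtVec {F : Type*} [Field F] {n : ℕ} (v : Fin n → F[X]) : ℕ :=
  ∑ j, (v j).support.card

/-- Free distance, minimum taken over codewords with nonzero constant coefficient. -/
noncomputable def dfree0 {F : Type*} [Field F] {n : ℕ}
    (C : Submodule F[X] (Fin n → F[X])) : ℕ :=
  sInf { w | ∃ v ∈ C, (∃ i, (v i).coeff 0 ≠ 0) ∧ wtVec v = w }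

/-- Truncation of a polynomial vector below degree `a`. -/
noncomputable def truncV {F : Type*} [Field F] {n : ℕ} (a : ℕ) (v : Fin n → F[X]) :
    Fin n → F[X] := fun i => ∑ t ∈ Finset.range a, Polynomial.C ((v i).coeff t) * X ^ t

lemma coeff_truncV {F : Type*} [Field F] {n : ℕ} (a : ℕ) (v : Fin n → F[X]) (i : Fin n)
    (t : ℕ) : (truncV a v i).coeff t = if t < a then (v i).coeff t else 0 := by
  classical
  simp only [truncV, Polynomial.finset_sum_coeff, Polynomial.coeff_C_mul,
    Polynomial.coeff_X_pow, mul_ite, mul_one, mul_zero]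
  rw [Finset.sum_ite_eq (Finset.range a) t fun s => (v i).coeff s]
  simp [Finset.mem_range]

open scoped Classical in
lemma wtTrunc_eq_sum_card {F : Type*} [Field F] {n : ℕ} (v : Fin n → F[X]) (j : ℕ) :
    wtTrunc v j = ∑ i, ((Finset.range (j + 1)).filter fun t => (v i).coeff t ≠ 0).card := by
  rw [wtTrunc, Finset.sum_comm]
  exact Finset.sum_congr rfl fun i _ => (Finset.card_filter _ _).symm

lemma wtTrunc_le_wtVec {F : Type*} [Field F] {n : ℕ} (v : Fin n → F[X]) (j : ℕ) :
    wtTrunc v j ≤ wtVec v := by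
  classical
  rw [wtTrunc_eq_sum_card, wtVec]
  refine Finset.sum_le_sum fun i _ => Finset.card_le_card fun t ht => ?_
  simp only [Finset.mem_filter] at ht
  exact Polynomial.mem_support_iff.2 ht.2

lemma truncV_ker {F : Type*} [Field F] {n k m : ℕ}
    (H : Matrix (Fin (n - k)) (Fin n) F[X]) (hm : ∀ r j, (H r j).natDegree ≤ m)
    (v : Fin n → F[X]) (hv : ∀ r, ∑ j, H r j * v j = 0) (a : ℕ)
    (hwin : ∀ t, a ≤ t → t ≤ a + m → ∀ i, (v i).coeff t = 0) :
    ∀ r, ∑ j, H r j * truncV a v j = 0 := by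
  classical
  intro r
  rw [Polynomial.ext_iff]
  intro t
  rw [Polynomial.coeff_zero]
  rcases le_or_gt t (a + m) with ht | ht
  · have h0 : (0 : F) = (∑ j, H r j * v j).coeff t := by rw [hv r, Polynomial.coeff_zero]
    rw [h0]
    simp only [Polynomial.finset_sum_coeff, Polynomial.coeff_mul]
    refine Finset.sum_congr rfl fun j _ => Finset.sum_congr rfl fun p hp => ?_
    rw [Finset.HasAntidiagonal.mem_antidiagonal] at hp
    rcases lt_or_ge p.2 a with h2 | h2
    · rw [coeff_truncV, if_pos h2]
    · have hz : (v j).coeff p.2 = 0 := hwin p.2 h2 (by omega) j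
      rw [coeff_truncV, if_neg (not_lt.2 h2), hz]
  · simp only [Polynomial.finset_sum_coeff, Polynomial.coeff_mul]
    refine Finset.sum_eq_zero fun j _ => Finset.sum_eq_zero fun p hp => ?_
    rw [Finset.HasAntidiagonal.mem_antidiagonal] at hp
    rcases lt_or_ge p.2 a with h2 | h2
    · have h1 : (H r j).natDegree < p.1 := by
        have := hm r j; omega
      rw [Polynomial.coeff_eq_zero_of_natDegree_lt h1, zero_mul]
    · rw [coeff_truncV, if_neg (not_lt.2 h2), mul_zero]

/-- For a non-catastrophic convolutional code (one admitting a full-row-rank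
parity-check matrix), the free distance equals the supremum of the column distances. -/
theorem dfree_eq_iSup_colDist {F : Type*} [Field F] {n k : ℕ}
    (C : Submodule F[X] (Fin n → F[X]))
    (H : Matrix (Fin (n - k)) (Fin n) F[X])
    (hHrank : LinearIndependent F[X] (fun i => H i))
    (hker : ∀ v : Fin n → F[X], v ∈ C ↔ ∀ r, ∑ j, H r j * v j = 0) :
    dfree0 C = ⨆ j, colDist C j := by
  classical
  set d := dfree0 C with hd
  clear_value d
  -- every column distance is at most d
  have hle : ∀ j, colDist C j ≤ d := by
    intro j
    by_cases hne : ({w | ∃ v ∈ C, (∃ i, (v i).coeff 0 ≠ 0) ∧ wtVec v = w} : Set ℕ).Nonempty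
    · obtain ⟨v, hv, hi, hw⟩ := Nat.sInf_mem hne
      calc colDist C j ≤ wtTrunc v j := Nat.sInf_le ⟨v, hv, hi, rfl⟩
        _ ≤ wtVec v := wtTrunc_le_wtVec v j
        _ = d := by rw [hd]; exact hw
    · have h1 : ({w | ∃ v ∈ C, (∃ i, (v i).coeff 0 ≠ 0) ∧ wtTrunc v j = w} : Set ℕ) = ∅ := by
        ext w
        simp only [Set.mem_setOf_eq, Set.mem_empty_iff_false, iff_false]
        rintro ⟨v, hv, hi, -⟩
        exact hne ⟨wtVec v, v, hv, hi, rfl⟩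
      rw [colDist, h1, Nat.sInf_empty]
      exact Nat.zero_le d
  refine le_antisymm ?_ (ciSup_le hle)
  rcases Nat.eq_zero_or_pos d with hd0 | hd0
  · rw [hd0]; exact Nat.zero_le _
  -- d > 0, so the defining set of dfree0 is nonempty
  have hne : ({w | ∃ v ∈ C, (∃ i, (v i).coeff 0 ≠ 0) ∧ wtVec v = w} : Set ℕ).Nonempty := by
    by_contra hcon
    rw [Set.not_nonempty_iff_eq_empty] at hcon
    have : d = 0 := by rw [hd, dfree0, hcon, Nat.sInf_empty]
    omega
  obtain ⟨vstar, hvstar, histar, -⟩ := Nat.sInf_mem hne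
  -- the maximal degree of entries of H
  obtain ⟨m, hm⟩ : ∃ m, ∀ r j, (H r j).natDegree ≤ m :=
    ⟨Finset.univ.sup (fun rj : Fin (n - k) × Fin n => (H rj.1 rj.2).natDegree),
      fun r j =>
        Finset.le_sup (f := fun rj : Fin (n - k) × Fin n => (H rj.1 rj.2).natDegree)
          (Finset.mem_univ (r, j))⟩
  obtain ⟨j0, hj0⟩ : ∃ j0, j0 + 1 = d * (m + 1) :=
    ⟨d * (m + 1) - 1, Nat.succ_pred_eq_of_pos (Nat.mul_pos hd0 (Nat.succ_pos m))⟩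
  -- d ≤ colDist C j0
  have hge : d ≤ colDist C j0 := by
    refine le_csInf ⟨wtTrunc vstar j0, vstar, hvstar, histar, rfl⟩ ?_
    rintro w ⟨v, hv, hv0, rfl⟩
    by_contra hlt
    push_neg at hlt
    -- the set of "bad" time slots
    set T : Finset ℕ :=
      (Finset.range (j0 + 1)).filter (fun t => ∃ i, (v i).coeff t ≠ 0) with hT
    clear_value T
    have hTcard : T.card < d := by
      have h1 : T.card ≤ wtTrunc v j0 := by
        rw [hT, Finset.card_filter, wtTrunc]
        refine Finset.sum_le_sum fun t _ => ?_
        split_ifs with h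
        · obtain ⟨i, hi⟩ := h
          have h2 := Finset.single_le_sum
            (f := fun i' : Fin n => if (v i').coeff t ≠ 0 then 1 else 0)
            (fun _ _ => Nat.zero_le _) (Finset.mem_univ i)
          simpa [hi] using h2
        · exact Nat.zero_le _
      omega
    -- find a block [b(m+1), b(m+1)+m] with no bad slot
    have hbex : ∃ b ∈ Finset.range d, b ∉ T.image (fun t => t / (m + 1)) := by
      by_contra hcon
      push_neg at hcon
      have hsub : Finset.range d ⊆ T.image (fun t => t / (m + 1)) := fun b hb => hcon b hb
      have := Finset.card_le_card hsub
      have := Finset.card_image_le (s := T) (f := fun t => t / (m + 1))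
      rw [Finset.card_range] at *
      omega
    obtain ⟨b, hbmem, hbim⟩ := hbex
    rw [Finset.mem_range] at hbmem
    have hbni : ∀ t ∈ T, t / (m + 1) ≠ b := by
      intro t ht heq
      exact hbim (Finset.mem_image.2 ⟨t, ht, heq⟩)
    -- b ≠ 0 since slot 0 is bad
    have h0T : (0 : ℕ) ∈ T := by
      rw [hT, Finset.mem_filter]
      exact ⟨Finset.mem_range.2 (by omega), hv0⟩
    have hb0 : b ≠ 0 := by
      intro hb
      exact hbni 0 h0T (by simp [hb])
    obtain ⟨a, ha⟩ : ∃ a, a = b * (m + 1) := ⟨b * (m + 1), rfl⟩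
    have ha1 : 1 ≤ a := by
      have h1 : 1 ≤ b := Nat.one_le_iff_ne_zero.2 hb0
      calc 1 ≤ b := h1
        _ ≤ b * (m + 1) := Nat.le_mul_of_pos_right b (by omega)
        _ = a := ha.symm
    have haj : a + m ≤ j0 := by
      have hb1 : b + 1 ≤ d := hbmem
      have h2 : (b + 1) * (m + 1) ≤ d * (m + 1) := Nat.mul_le_mul_right _ hb1
      have hexp : (b + 1) * (m + 1) = b * (m + 1) + m + 1 := by ring
      omega
    have hwin : ∀ t, a ≤ t → t ≤ a + m → ∀ i, (v i).coeff t = 0 := by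
      intro t h1 h2 i
      have hdiv : t / (m + 1) = b :=
        Nat.div_eq_of_lt_le (by omega) (by
          have hexp : (b + 1) * (m + 1) = b * (m + 1) + m + 1 := by ring
          omega)
      have htT : t ∉ T := fun hcontra => hbni t hcontra hdiv
      by_contra hne'
      exact htT (by
        rw [hT, Finset.mem_filter]
        exact ⟨Finset.mem_range.2 (by omega), ⟨i, hne'⟩⟩)
    -- the truncated vector is a codeword
    have hv' : truncV a v ∈ C :=
      (hker _).2 (truncV_ker H hm v ((hker v).1 hv) a hwin)
    have hv'0 : ∃ i, (truncV a v i).coeff 0 ≠ 0 := by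
      obtain ⟨i, hi⟩ := hv0
      exact ⟨i, by rw [coeff_truncV, if_pos (by omega)]; exact hi⟩
    have hwt : wtVec (truncV a v) ≤ wtTrunc v j0 := by
      rw [wtVec, wtTrunc_eq_sum_card]
      refine Finset.sum_le_sum fun i _ => Finset.card_le_card fun t ht => ?_
      rw [Polynomial.mem_support_iff, coeff_truncV] at ht
      by_cases hta : t < a
      · rw [if_pos hta] at ht
        exact Finset.mem_filter.2 ⟨Finset.mem_range.2 (by omega), ht⟩
      · rw [if_neg hta] at ht
        exact absurd rfl ht
    have hdle : d ≤ wtVec (truncV a v) := by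
      rw [hd]
      exact Nat.sInf_le ⟨truncV a v, hv', hv'0, rfl⟩
    omega
  calc d ≤ colDist C j0 := hge
    _ ≤ ⨆ j, colDist C j := le_ciSup ⟨d, by rintro x ⟨j, rfl⟩; exact hle j⟩ j0
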